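/- Let φ : ℝ → ℝ be continuous, nonincreasing, with φ = θ_j on (-∞, 0], φ = θ_i on [η, ∞), strictly decreasing on (0, η), θ_i < θ_j. Suppose w : ℝ → ℝ is continuous, nonincreasing, satisfies w ≥ φ, w(x) = θ_j for all x ≤ a and w(x) = θ_i for all x ≥ b (some a ≤ b). If w(x) > φ(x) for all x ∈ (0, η], then there exists ε > 0 with w(x) ≥ φ(x − ε) for all x ∈ ℝ. -/
import Mathlib


open Set

/-- sliding lemma. A continuous nonincreasing function `w` lying above a
compact strictly-monotone profile `φ`, strictly above it on `(0, η]`, equal to the limiting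
states outside a bounded set, and with `inf {x : w x < θj} > 0`, lies above a small
leftward shift `φ(· - ε)` of the profile. -/
theorem sliding_lemma
    (θi θj η : ℝ) (hij : θi < θj) (hη : 0 < η)
    (φ w : ℝ → ℝ)
    (hφcont : Continuous φ) (hφmono : Antitone φ)
    (hφleft : ∀ x ≤ (0:ℝ), φ x = θj) (hφright : ∀ x ≥ η, φ x = θi)
    (hφstrict : StrictAntiOn φ (Set.Ioo 0 η))
    (hwcont : Continuous w) (hwmono : Antitone w)
    (hwge : ∀ x, φ x ≤ w x)
    (a b : ℝ) (hab : a ≤ b)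
    (hwleft : ∀ x ≤ a, w x = θj) (hwright : ∀ x ≥ b, w x = θi)
    (hstrictabove : ∀ x ∈ Set.Ioc 0 η, φ x < w x)
    (hinf : 0 < sInf {x : ℝ | w x < θj}) :
    ∃ ε > (0:ℝ), ∀ x : ℝ, φ (x - ε) ≤ w x := by
  set S : Set ℝ := {x : ℝ | w x < θj} with hS
  set c : ℝ := sInf S with hcdef
  have hc : 0 < c := hinf
  have hSbdd : BddBelow S := by
    refine ⟨a, fun x hx => ?_⟩
    by_contra h
    push_neg at h
    have : w x = θj := hwleft x h.le
    simp only [hS, mem_setOf_eq, this] at hx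
    exact lt_irrefl _ hx
  -- φ is bounded between θi and θj
  have hφle : ∀ y, φ y ≤ θj := by
    intro y
    rcases le_total y 0 with h | h
    · exact (hφleft y h).le
    · calc φ y ≤ φ 0 := hφmono h
        _ = θj := hφleft 0 le_rfl
  have hφgei : ∀ y, θi ≤ φ y := by
    intro y
    rcases le_total η y with h | h
    · exact (hφright y h).ge
    · calc θi = φ η := (hφright η le_rfl).symm
        _ ≤ φ y := hφmono h
  -- w = θj on (-∞, c]
  have hwc : ∀ x ≤ c, θj ≤ w x := by
    intro x hx
    by_contra h
    push_neg at h
    have hopen : IsOpen S := isOpen_lt hwcont continuous_const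
    rw [Metric.isOpen_iff] at hopen
    obtain ⟨δ, hδ, hball⟩ := hopen x h
    have hmem : x - δ / 2 ∈ S := by
      apply hball
      rw [Metric.mem_ball, Real.dist_eq]
      rw [show x - δ / 2 - x = -(δ / 2) by ring, abs_neg, abs_of_pos (by linarith)]
      linarith
    have := csInf_le hSbdd hmem
    rw [← hcdef] at this
    linarith
  -- minimum gap on [min c η, η]
  set c' : ℝ := min c η with hc'def
  have hc'pos : 0 < c' := lt_min hc hη
  have hc'η : c' ≤ η := min_le_right _ _
  obtain ⟨x0, hx0, hmin'⟩ :=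
    isCompact_Icc.exists_isMinOn ⟨c', le_refl c', hc'η⟩
      ((hwcont.sub hφcont).continuousOn (s := Icc c' η))
  have hmin : ∀ y ∈ Icc c' η, w x0 - φ x0 ≤ w y - φ y := fun y hy => hmin' hy
  set m : ℝ := w x0 - φ x0 with hmdef
  have hm : 0 < m := sub_pos.2 (hstrictabove x0 ⟨lt_of_lt_of_le hc'pos hx0.1, hx0.2⟩)
  -- uniform continuity of φ on [0, η]
  have hUC : UniformContinuousOn φ (Icc (0:ℝ) η) :=
    isCompact_Icc.uniformContinuousOn_of_continuous hφcont.continuousOn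
  rw [Metric.uniformContinuousOn_iff] at hUC
  obtain ⟨δ, hδpos, hδ⟩ := hUC m hm
  -- edge control near η
  have hk0 : 0 < w (η + 0) - φ (η - 0) := by
    rw [add_zero, sub_zero]
    exact sub_pos.2 (hstrictabove η ⟨hη, le_rfl⟩)
  have hkc : ContinuousAt (fun t : ℝ => w (η + t) - φ (η - t)) 0 := by fun_prop
  rw [Metric.continuousAt_iff] at hkc
  obtain ⟨δ3, hδ3, hk3⟩ := hkc _ hk0
  set ε3 : ℝ := δ3 / 2 with hε3def
  have hε3pos : 0 < ε3 := by positivity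
  have hε3 : φ (η - ε3) ≤ w (η + ε3) := by
    have hd : dist ε3 (0:ℝ) < δ3 := by
      rw [Real.dist_eq, sub_zero, abs_of_pos hε3pos]; linarith
    have := hk3 hd
    rw [Real.dist_eq] at this
    have h2 := (abs_lt.1 this).1
    rw [add_zero, sub_zero] at h2
    linarith
  -- choose ε
  refine ⟨min (min c ε3) (δ / 2), lt_min (lt_min hc hε3pos) (by linarith), ?_⟩
  set ε : ℝ := min (min c ε3) (δ / 2) with hεdef
  have hεc : ε ≤ c := le_trans (min_le_left _ _) (min_le_left _ _)
  have hεε3 : ε ≤ ε3 := le_trans (min_le_left _ _) (min_le_right _ _)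
  have hεδ : ε < δ := lt_of_le_of_lt (min_le_right _ _) (by linarith)
  have hεpos : 0 < ε := lt_min (lt_min hc hε3pos) (by linarith)
  intro x
  rcases le_or_gt x c with hxc | hxc
  · -- w x ≥ θj ≥ φ (x - ε)
    exact le_trans (hφle _) (hwc x hxc)
  · rcases le_or_gt x η with hxη | hxη
    · -- x ∈ (c, η]: use the gap and uniform continuity
      have hx01 : x ∈ Icc (0:ℝ) η := ⟨le_of_lt (lt_trans hc hxc), hxη⟩
      have hx02 : x - ε ∈ Icc (0:ℝ) η := ⟨by linarith, by linarith⟩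
      have hdist : dist (x - ε) x < δ := by
        rw [Real.dist_eq, show x - ε - x = -ε by ring, abs_neg, abs_of_pos hεpos]
        exact hεδ
      have h1 := hδ _ hx02 _ hx01 hdist
      rw [Real.dist_eq] at h1
      have h2 := (abs_lt.1 h1).2
      have h3 : m ≤ w x - φ x := hmin x ⟨le_trans (min_le_left _ _) hxc.le, hxη⟩
      linarith
    · rcases le_or_gt (η + ε) x with hxe | hxe
      · -- x - ε ≥ η: φ (x - ε) = θi
        rw [hφright (x - ε) (by linarith)]
        exact le_trans (hφgei x) (hwge x)
      · -- η < x < η + ε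
        calc φ (x - ε) ≤ φ (η - ε) := hφmono (by linarith)
          _ ≤ φ (η - ε3) := hφmono (by linarith)
          _ ≤ w (η + ε3) := hε3
          _ ≤ w x := hwmono (by linarith)
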